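/- Let X, Y, Z be real normed spaces with X, Y of dimension at least 2, and let T : X × Y → Z be a nonzero bounded bilinear operator. Then no point of the norm attainment set M_T is a smooth point of the unit sphere of X × Y (with the max norm). -/

import Mathlib

def SmoothPt {X : Type*} [NormedAddCommGroup X] [NormedSpace ℝ X] (x : X) : Prop :=
  ‖x‖ = 1 ∧ ∃! f : X →L[ℝ] ℝ, ‖f‖ = 1 ∧ f x = 1

/-- A nonzero bounded bilinear operator never attains its norm at a smooth point of
the unit sphere of the max-norm product. -/
theorem statement8 {X Y Z : Type*} [NormedAddCommGroup X] [NormedSpace ℝ X]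
    [NormedAddCommGroup Y] [NormedSpace ℝ Y] [NormedAddCommGroup Z] [NormedSpace ℝ Z]
    (hX : 2 ≤ Module.rank ℝ X) (hY : 2 ≤ Module.rank ℝ Y)
    (T : X →L[ℝ] Y →L[ℝ] Z) (hT : T ≠ 0) :
    ∀ p : X × Y, ‖p‖ = 1 → ‖T p.1 p.2‖ = ‖T‖ → ¬ SmoothPt p := by
  rintro ⟨x, y⟩ hp hatt ⟨-, F0, ⟨hF0n, hF0p⟩, huniq⟩
  have hTpos : (0 : ℝ) < ‖T‖ := lt_of_le_of_ne (norm_nonneg T) (fun h => hT ((ContinuousLinearMap.opNorm_zero_iff T).mp h.symm))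
  have hple : max ‖x‖ ‖y‖ = 1 := hp
  have hx1 : ‖x‖ ≤ 1 := le_of_max_le_left hple.le
  have hy1 : ‖y‖ ≤ 1 := le_of_max_le_right hple.le
  have hbound : ‖T x y‖ ≤ ‖T‖ * ‖x‖ * ‖y‖ := T.le_opNorm₂ x y
  rw [hatt] at hbound
  have hxy1 : 1 ≤ ‖x‖ * ‖y‖ := by
    nlinarith
  have hx : ‖x‖ = 1 := by nlinarith [norm_nonneg x, norm_nonneg y]
  have hy : ‖y‖ = 1 := by nlinarith [norm_nonneg x, norm_nonneg y]
  obtain ⟨f, hfn, hfx⟩ := exists_dual_vector ℝ x (by simp [← norm_pos_iff, hx])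
  obtain ⟨g, hgn, hgy⟩ := exists_dual_vector ℝ y (by simp [← norm_pos_iff, hy])
  rw [hx] at hfx; rw [hy] at hgy
  set F : X × Y →L[ℝ] ℝ := f.comp (ContinuousLinearMap.fst ℝ X Y) with hF
  set G : X × Y →L[ℝ] ℝ := g.comp (ContinuousLinearMap.snd ℝ X Y) with hG
  have hFp : F (x, y) = 1 := by simpa [F] using hfx
  have hGp : G (x, y) = 1 := by simpa [G] using hgy
  have hFn : ‖F‖ = 1 := by
    refine le_antisymm ?_ ?_
    · calc ‖F‖ ≤ ‖f‖ * ‖ContinuousLinearMap.fst ℝ X Y‖ := f.opNorm_comp_le _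
        _ ≤ 1 * 1 := by
            gcongr
            · exact hfn.le
            · exact ContinuousLinearMap.norm_fst_le ℝ X Y
        _ = 1 := by ring
    · have := F.le_opNorm (x, y)
      rw [hFp, hp] at this; simpa using this
  have hGn : ‖G‖ = 1 := by
    refine le_antisymm ?_ ?_
    · calc ‖G‖ ≤ ‖g‖ * ‖ContinuousLinearMap.snd ℝ X Y‖ := g.opNorm_comp_le _
        _ ≤ 1 * 1 := by
            gcongr
            · exact hgn.le
            · exact ContinuousLinearMap.norm_snd_le ℝ X Y
        _ = 1 := by ring
    · have := G.le_opNorm (x, y)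
      rw [hGp, hp] at this; simpa using this
  have hFeq : F = F0 := huniq F ⟨hFn, hFp⟩
  have hGeq : G = F0 := huniq G ⟨hGn, hGp⟩
  have : F ((0 : X), y) = G ((0 : X), y) := by rw [hFeq, hGeq]
  simp [F, G, hgy] at this
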